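/- Suppose the Learner's predictions a^1, …, a^T are (α, n)-multicalibrated on the collection of groups S(f) ∪ {Θ}, where S(f) := { {θ ∈ Θ : f(θ) = d} : d ∈ D_f } is the family of level sets of the forecaster f. Then the Learner is (α, n)-calibrated on Θ, and the Learner (α·n·(|D_f| + 2) + 2/n)-calibeats f; that is, B^a ≤ R^f + α·n·(|D_f| + 2) + 2/n. -/

import Mathlib

open scoped BigOperators Classical

noncomputable section

/-- Membership in the `i`-th bucket of the `n`-bucketing of `[0,1]`:
`B^i_n = [i/n, (i+1)/n)` for `i < n−1`, and `B^{n-1}_n = [1−1/n, 1]`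
(buckets indexed from `0`). -/
def inBucket (n : ℕ) (i : Fin n) (z : ℝ) : Prop :=
  ((i : ℝ) / n ≤ z ∧ z < ((i : ℝ) + 1) / n) ∨ ((i : ℕ) + 1 = n ∧ z = 1)

/-- The average of `v` over a finite set `S` of rounds (zero if `S` is empty). -/
noncomputable def subseqAvg {T : ℕ} (S : Finset (Fin T)) (v : Fin T → ℝ) : ℝ :=
  (∑ t ∈ S, v t) / S.card

lemma inBucket_exists {n : ℕ} (hn : 1 ≤ n) {z : ℝ} (hz : z ∈ Set.Icc (0:ℝ) 1) :
    ∃ i : Fin n, inBucket n i z := by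
  obtain ⟨hz0, hz1⟩ := hz
  have hn0 : (0:ℝ) < n := by exact_mod_cast hn
  rcases eq_or_lt_of_le hz1 with h1 | h1
  · refine ⟨⟨n - 1, by omega⟩, Or.inr ⟨?_, h1⟩⟩
    show (n - 1) + 1 = n
    omega
  · have hzn0 : 0 ≤ z * n := by positivity
    have hk : ⌊z * n⌋₊ < n := by
      rw [Nat.floor_lt hzn0]
      nlinarith
    refine ⟨⟨⌊z * n⌋₊, hk⟩, Or.inl ⟨?_, ?_⟩⟩
    · rw [div_le_iff₀ hn0]
      exact_mod_cast Nat.floor_le hzn0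
    · rw [lt_div_iff₀ hn0]
      push_cast
      exact Nat.lt_floor_add_one (z * n)

lemma inBucket_unique {n : ℕ} {z : ℝ} {i j : Fin n}
    (h1 : inBucket n i z) (h2 : inBucket n j z) : i = j := by
  have hn0 : (0:ℝ) < n := by exact_mod_cast i.pos
  have key : ∀ {p q : Fin n}, ((p : ℝ) / n ≤ z ∧ z < ((p : ℝ) + 1) / n) →
      ((q : ℝ) / n ≤ z ∧ z < ((q : ℝ) + 1) / n) → (p : ℕ) ≤ q := by
    intro p q hp hq
    have : (p : ℝ) / n < ((q : ℝ) + 1) / n := lt_of_le_of_lt hp.1 hq.2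
    have : (p : ℝ) < (q : ℝ) + 1 := by
      rwa [div_lt_div_iff₀ hn0 hn0, mul_lt_mul_iff_of_pos_right hn0] at this
    have : (p : ℕ) < (q : ℕ) + 1 := by exact_mod_cast this
    omega
  have last : ∀ {p : Fin n}, ((p : ℝ) / n ≤ z ∧ z < ((p : ℝ) + 1) / n) → z < 1 := by
    intro p hp
    have hle : ((p : ℝ) + 1) ≤ n := by exact_mod_cast p.isLt
    have : ((p : ℝ) + 1) / n ≤ 1 := by rw [div_le_one hn0]; exact hle
    linarith [hp.2]
  rcases h1 with hp | ⟨he1, hz1⟩ <;> rcases h2 with hq | ⟨he2, hz2⟩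
  · exact Fin.ext (le_antisymm (key hp hq) (key hq hp))
  · exact absurd hz2 (ne_of_lt (last hp))
  · exact absurd hz1 (ne_of_lt (last hq))
  · exact Fin.ext (by omega)

lemma abs_sub_mid {n : ℕ} {i : Fin n} {z : ℝ} (h : inBucket n i z) :
    |z - ((i : ℝ) + 1/2) / n| ≤ 1 / (2 * n) := by
  have hn0 : (0:ℝ) < n := by exact_mod_cast i.pos
  have e1 : ((i : ℝ) + 1/2) / n = (i : ℝ) / n + 1 / (2 * n) := by field_simp
  have e2 : ((i : ℝ) + 1) / n = (i : ℝ) / n + 1 / (2 * n) + 1 / (2 * n) := by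
    field_simp; ring
  rcases h with ⟨hl, hr⟩ | ⟨he, hz⟩
  · rw [abs_le]; constructor <;> linarith
  · have hi : ((i : ℕ) : ℝ) + 1 = (n : ℝ) := by exact_mod_cast he
    have : z - ((i : ℝ) + 1/2) / n = 1 / (2 * n) := by
      rw [hz]; field_simp; linarith
    rw [this, abs_of_nonneg (by positivity)]

lemma card_mul_avg {T : ℕ} (C : Finset (Fin T)) (b : Fin T → ℝ) :
    (C.card : ℝ) * subseqAvg C b = ∑ t ∈ C, b t := by
  rcases Finset.eq_empty_or_nonempty C with rfl | h
  · simp [subseqAvg]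
  · have hc : (C.card : ℝ) ≠ 0 := by
      exact_mod_cast Finset.card_ne_zero.mpr h
    rw [subseqAvg, mul_div_cancel₀ _ hc]

lemma avg_mem_Icc {T : ℕ} (C : Finset (Fin T)) (b : Fin T → ℝ)
    (hb : ∀ t ∈ C, b t ∈ Set.Icc (0:ℝ) 1) : subseqAvg C b ∈ Set.Icc (0:ℝ) 1 := by
  constructor
  · apply div_nonneg _ (by positivity)
    exact Finset.sum_nonneg fun t ht => (hb t ht).1
  · apply div_le_one_of_le₀
    · calc ∑ t ∈ C, b t ≤ ∑ t ∈ C, (1:ℝ) := Finset.sum_le_sum fun t ht => (hb t ht).2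
        _ = C.card := by simp
    · positivity

lemma sum_sq_avg_le {T : ℕ} (C : Finset (Fin T)) (b : Fin T → ℝ) (x : ℝ) :
    ∑ t ∈ C, (b t - subseqAvg C b) ^ 2 ≤ ∑ t ∈ C, (b t - x) ^ 2 := by
  set m := subseqAvg C b with hm
  have hs : (C.card : ℝ) * m = ∑ t ∈ C, b t := card_mul_avg C b
  have key : ∑ t ∈ C, (b t - x) ^ 2 - ∑ t ∈ C, (b t - m) ^ 2
      = (C.card : ℝ) * (m - x) ^ 2 := by
    rw [← Finset.sum_sub_distrib]
    have h1 : ∀ t ∈ C, (b t - x) ^ 2 - (b t - m) ^ 2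
        = (m - x) * (2 * b t) - (m - x) * (x + m) := fun t _ => by ring
    rw [Finset.sum_congr rfl h1, Finset.sum_sub_distrib, ← Finset.mul_sum,
      Finset.sum_const, nsmul_eq_mul, ← Finset.mul_sum, ← hs]
    ring
  nlinarith [sq_nonneg (m - x), Nat.cast_nonneg (α := ℝ) C.card]

lemma sum_partition_bucket {T n : ℕ} (hn : 1 ≤ n) (a : Fin T → ℝ)
    (ha : ∀ t, a t ∈ Set.Icc (0:ℝ) 1) (S : Finset (Fin T)) (G : Fin T → ℝ) :
    ∑ t ∈ S, G t = ∑ i : Fin n, ∑ t ∈ S.filter (fun t => inBucket n i (a t)), G t := by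
  simp only [Finset.sum_filter]
  rw [Finset.sum_comm]
  refine (Finset.sum_congr rfl fun t _ => ?_).symm
  obtain ⟨i0, hi0⟩ := inBucket_exists hn (ha t)
  rw [Finset.sum_eq_single i0]
  · simp [hi0]
  · intro j _ hj
    rw [if_neg (fun h => hj (inBucket_unique h hi0))]
  · intro h
    exact absurd (Finset.mem_univ i0) h

lemma sum_partition_level {T : ℕ} {Θ : Type} (θ : Fin T → Θ) (f : Θ → ℝ) (D : Finset ℝ)
    (hfD : ∀ x, f x ∈ D) (G : Fin T → ℝ) :
    ∑ t, G t = ∑ d ∈ D, ∑ t ∈ Finset.univ.filter (fun t => f (θ t) = d), G t := by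
  simp only [Finset.sum_filter]
  rw [Finset.sum_comm]
  refine (Finset.sum_congr rfl fun t _ => ?_).symm
  rw [Finset.sum_eq_single (f (θ t))]
  · simp
  · intro d _ hd
    rw [if_neg (fun h => hd h.symm)]
  · intro h
    exact absurd (hfD (θ t)) h

lemma cell_bound {T n : ℕ} (C : Finset (Fin T)) (a b : Fin T → ℝ) (i : Fin n)
    (hbk : ∀ t ∈ C, inBucket n i (a t))
    (ha : ∀ t ∈ C, a t ∈ Set.Icc (0:ℝ) 1) (hb : ∀ t ∈ C, b t ∈ Set.Icc (0:ℝ) 1)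
    (ε : ℝ) (hcal : |∑ t ∈ C, (b t - a t)| ≤ ε) :
    ∑ t ∈ C, (a t - b t) ^ 2
      ≤ ∑ t ∈ C, (b t - subseqAvg C b) ^ 2 + 2 * C.card / n + ε := by
  have hn0 : (0:ℝ) < n := by exact_mod_cast i.pos
  set m := subseqAvg C b with hm
  set c := ((i : ℝ) + 1/2) / n with hc
  have hm01 : m ∈ Set.Icc (0:ℝ) 1 := avg_mem_Icc C b hb
  have hs : (C.card : ℝ) * m = ∑ t ∈ C, b t := card_mul_avg C b
  have hac : ∀ t ∈ C, |a t - c| ≤ 1 / (2 * n) := fun t ht => abs_sub_mid (hbk t ht)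
  have hA : ∑ t ∈ C, (a t - b t) ^ 2
      = ∑ t ∈ C, (b t - m) ^ 2 + ∑ t ∈ C, (a t - m) ^ 2
        + 2 * ∑ t ∈ C, ((a t - m) * (m - b t)) := by
    rw [Finset.mul_sum, ← Finset.sum_add_distrib, ← Finset.sum_add_distrib]
    exact Finset.sum_congr rfl fun t _ => by ring
  have hzero : ∑ t ∈ C, (m - b t) = 0 := by
    rw [Finset.sum_sub_distrib, Finset.sum_const, nsmul_eq_mul, ← hs]
    ring
  have hcross : ∑ t ∈ C, ((a t - m) * (m - b t)) = ∑ t ∈ C, ((a t - c) * (m - b t)) := by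
    have : ∑ t ∈ C, ((a t - m) * (m - b t)) - ∑ t ∈ C, ((a t - c) * (m - b t))
        = (c - m) * ∑ t ∈ C, (m - b t) := by
      rw [Finset.mul_sum, ← Finset.sum_sub_distrib]
      exact Finset.sum_congr rfl fun t _ => by ring
    rw [hzero, mul_zero] at this
    linarith
  have hcross_bound : |∑ t ∈ C, ((a t - c) * (m - b t))| ≤ C.card * (1 / (2 * n)) := by
    calc |∑ t ∈ C, ((a t - c) * (m - b t))| ≤ ∑ t ∈ C, |(a t - c) * (m - b t)| :=
        Finset.abs_sum_le_sum_abs _ _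
      _ ≤ ∑ t ∈ C, (1 / (2 * (n:ℝ))) := by
        refine Finset.sum_le_sum fun t ht => ?_
        rw [abs_mul]
        have h1 : |m - b t| ≤ 1 := by
          rw [abs_le]; obtain ⟨h2, h3⟩ := hb t ht; obtain ⟨h4, h5⟩ := hm01
          constructor <;> linarith
        calc |a t - c| * |m - b t| ≤ (1 / (2 * n)) * 1 :=
            mul_le_mul (hac t ht) h1 (abs_nonneg _) (by positivity)
          _ = 1 / (2 * n) := mul_one _
      _ = C.card * (1 / (2 * n)) := by rw [Finset.sum_const, nsmul_eq_mul]
  have hcm : (C.card : ℝ) * |c - m| ≤ C.card * (1 / (2 * n)) + ε := by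
    have h1 : (C.card : ℝ) * (c - m) = ∑ t ∈ C, (c - a t) + ∑ t ∈ C, (a t - b t) := by
      rw [← Finset.sum_add_distrib]
      have : ∑ t ∈ C, ((c - a t) + (a t - b t)) = ∑ t ∈ C, (c - b t) :=
        Finset.sum_congr rfl fun t _ => by ring
      rw [this, Finset.sum_sub_distrib, Finset.sum_const, nsmul_eq_mul, ← hs]
      ring
    have h2 : |∑ t ∈ C, (c - a t)| ≤ C.card * (1 / (2 * n)) := by
      calc |∑ t ∈ C, (c - a t)| ≤ ∑ t ∈ C, |c - a t| := Finset.abs_sum_le_sum_abs _ _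
        _ ≤ ∑ t ∈ C, (1 / (2 * (n:ℝ))) := Finset.sum_le_sum fun t ht => by
            rw [abs_sub_comm]; exact hac t ht
        _ = C.card * (1 / (2 * n)) := by rw [Finset.sum_const, nsmul_eq_mul]
    have h3 : |∑ t ∈ C, (a t - b t)| ≤ ε := by
      have : ∑ t ∈ C, (a t - b t) = -∑ t ∈ C, (b t - a t) := by
        rw [← Finset.sum_neg_distrib]
        exact Finset.sum_congr rfl fun t _ => by ring
      rw [this, abs_neg]; exact hcal
    calc (C.card : ℝ) * |c - m| = |(C.card : ℝ) * (c - m)| := by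
          rw [abs_mul, Nat.abs_cast]
      _ ≤ |∑ t ∈ C, (c - a t)| + |∑ t ∈ C, (a t - b t)| := by
        rw [h1]; exact abs_add_le _ _
      _ ≤ C.card * (1 / (2 * n)) + ε := add_le_add h2 h3
  have hquad : ∑ t ∈ C, (a t - m) ^ 2 ≤ 2 * (C.card * (1 / (2 * n))) + ε := by
    have h1 : ∀ t ∈ C, (a t - m) ^ 2 ≤ 1 / (2 * n) + |c - m| := by
      intro t ht
      have hA1 : |a t - m| ≤ 1 := by
        rw [abs_le]; obtain ⟨h2, h3⟩ := ha t ht; obtain ⟨h4, h5⟩ := hm01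
        constructor <;> linarith
      have hsq : (a t - m) ^ 2 ≤ |a t - m| := by
        nlinarith [sq_abs (a t - m), abs_nonneg (a t - m)]
      have htri : |a t - m| ≤ |a t - c| + |c - m| := abs_sub_le _ _ _
      have := hac t ht
      linarith
    calc ∑ t ∈ C, (a t - m) ^ 2 ≤ ∑ t ∈ C, (1 / (2 * (n:ℝ)) + |c - m|) :=
        Finset.sum_le_sum h1
      _ = C.card * (1 / (2 * n)) + C.card * |c - m| := by
        rw [Finset.sum_add_distrib, Finset.sum_const, Finset.sum_const, nsmul_eq_mul, nsmul_eq_mul]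
      _ ≤ 2 * (C.card * (1 / (2 * n))) + ε := by linarith
  have hconv : 2 * (C.card : ℝ) / n = 4 * ((C.card : ℝ) * (1 / (2 * n))) := by
    field_simp
    ring
  have hcb : 2 * ∑ t ∈ C, ((a t - m) * (m - b t)) ≤ 2 * (C.card * (1 / (2 * n))) := by
    rw [hcross]
    have := le_abs_self (∑ t ∈ C, ((a t - c) * (m - b t)))
    linarith [hcross_bound]
  linarith [hA, hquad, hcb, hconv]
/-- **Theorem 3.2, calibeating a single forecaster.**
If the Learner's predictions `a` are `(α, n)`-multicalibrated on the level sets of a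
forecaster `f` together with the whole domain `Θ`, then the Learner is `(α, n)`-calibrated
on `Θ` and `(α·n·(|D_f| + 2) + 2/n)`-calibeats `f`:
`B^a ≤ R^f + α·n·(|D_f| + 2) + 2/n`. -/
theorem calibeating_single_forecaster
    (T n : ℕ) (hT : 1 ≤ T) (hn : 1 ≤ n)
    (Θ : Type) (θ : Fin T → Θ)
    (a b : Fin T → ℝ)
    (ha : ∀ t, a t ∈ Set.Icc (0 : ℝ) 1) (hb : ∀ t, b t ∈ Set.Icc (0 : ℝ) 1)
    -- the forecaster `f`, with finite set of possible forecasts `D_f ⊆ [0,1]`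
    (f : Θ → ℝ) (D : Finset ℝ) (hfD : ∀ x, f x ∈ D) (hD : ∀ d ∈ D, d ∈ Set.Icc (0 : ℝ) 1)
    (α : ℝ)
    -- `(α, n)`-multicalibration with respect to the level sets of `f` …
    (hcal_f : ∀ d ∈ D, ∀ i : Fin n,
      (1 / (T : ℝ)) *
        |∑ t, if f (θ t) = d ∧ inBucket n i (a t) then b t - a t else 0| ≤ α)
    -- … and with respect to the whole domain `Θ`
    (hcal_all : ∀ i : Fin n,
      (1 / (T : ℝ)) * |∑ t, if inBucket n i (a t) then b t - a t else 0| ≤ α) :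
    -- the Learner is `(α, n)`-calibrated on `Θ`, and she calibeats `f`:
    (∀ i : Fin n,
      (1 / (T : ℝ)) * |∑ t, if inBucket n i (a t) then b t - a t else 0| ≤ α) ∧
    (1 / (T : ℝ)) * ∑ t, (a t - b t) ^ 2 ≤
      ((1 / (T : ℝ)) * ∑ d ∈ D,
        ∑ t ∈ Finset.univ.filter fun t => f (θ t) = d,
          (b t - subseqAvg (Finset.univ.filter fun t => f (θ t) = d) b) ^ 2) +
      α * n * (D.card + 2) + 2 / n := by
  refine ⟨hcal_all, ?_⟩
  have hT0 : (0:ℝ) < T := by exact_mod_cast hT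
  have hn0 : (0:ℝ) < n := by exact_mod_cast hn
  have hα0 : 0 ≤ α := by
    refine le_trans ?_ (hcal_all ⟨0, hn⟩)
    positivity
  set Sd : ℝ → Finset (Fin T) := fun d => Finset.univ.filter (fun t => f (θ t) = d) with hSd
  set Cdi : ℝ → Fin n → Finset (Fin T) :=
    fun d i => (Sd d).filter (fun t => inBucket n i (a t)) with hCdi
  -- the refinement score numerator
  set R : ℝ := ∑ d ∈ D, ∑ t ∈ Sd d, (b t - subseqAvg (Sd d) b) ^ 2 with hR
  -- calibration on cells
  have hcal' : ∀ d ∈ D, ∀ i : Fin n, |∑ t ∈ Cdi d i, (b t - a t)| ≤ α * T := by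
    intro d hd i
    have h1 := hcal_f d hd i
    have h2 : Cdi d i = Finset.univ.filter
        (fun t => f (θ t) = d ∧ inBucket n i (a t)) := by
      simp only [hCdi, hSd]
      rw [Finset.filter_filter]
    have h3 : ∑ t ∈ Cdi d i, (b t - a t)
        = ∑ t, if f (θ t) = d ∧ inBucket n i (a t) then b t - a t else 0 := by
      rw [h2, Finset.sum_filter]
    rw [h3]
    rw [div_mul_eq_mul_div, one_mul, div_le_iff₀ hT0] at h1
    exact h1
  -- the key global inequality
  have hcard : ∑ d ∈ D, ∑ i : Fin n, ((Cdi d i).card : ℝ) = T := by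
    have h1 : ∑ t : Fin T, (1:ℝ) = ∑ d ∈ D, ∑ t ∈ Sd d, (1:ℝ) :=
      sum_partition_level θ f D hfD _
    have h2 : ∀ d, ∑ t ∈ Sd d, (1:ℝ) = ∑ i : Fin n, ∑ t ∈ Cdi d i, (1:ℝ) :=
      fun d => sum_partition_bucket hn a ha (Sd d) _
    have h3 : ∑ t : Fin T, (1:ℝ) = (T:ℝ) := by simp
    rw [← h3, h1]
    refine Finset.sum_congr rfl fun d _ => ?_
    rw [h2 d]
    exact Finset.sum_congr rfl fun i _ => by rw [Finset.sum_const, nsmul_eq_mul, mul_one]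
  have big : ∑ t, (a t - b t) ^ 2 ≤ R + 2 * (T:ℝ) / n + D.card * (n * (α * T)) := by
    have h1 : ∑ t, (a t - b t) ^ 2
        = ∑ d ∈ D, ∑ i : Fin n, ∑ t ∈ Cdi d i, (a t - b t) ^ 2 := by
      rw [sum_partition_level θ f D hfD (fun t => (a t - b t) ^ 2)]
      exact Finset.sum_congr rfl fun d _ =>
        sum_partition_bucket hn a ha (Sd d) _
    have h2 : ∀ d ∈ D, ∀ i : Fin n, ∑ t ∈ Cdi d i, (a t - b t) ^ 2
        ≤ ∑ t ∈ Cdi d i, (b t - subseqAvg (Sd d) b) ^ 2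
          + (2 * ((Cdi d i).card : ℝ) / n + α * T) := by
      intro d hd i
      have hc1 := cell_bound (Cdi d i) a b i
        (fun t ht => (Finset.mem_filter.mp ht).2)
        (fun t _ => ha t) (fun t _ => hb t) (α * T) (hcal' d hd i)
      have hc2 := sum_sq_avg_le (Cdi d i) b (subseqAvg (Sd d) b)
      linarith
    have h3 : ∀ d, ∑ i : Fin n, ∑ t ∈ Cdi d i, (b t - subseqAvg (Sd d) b) ^ 2
        = ∑ t ∈ Sd d, (b t - subseqAvg (Sd d) b) ^ 2 :=
      fun d => (sum_partition_bucket hn a ha (Sd d) _).symm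
    calc ∑ t, (a t - b t) ^ 2
        = ∑ d ∈ D, ∑ i : Fin n, ∑ t ∈ Cdi d i, (a t - b t) ^ 2 := h1
      _ ≤ ∑ d ∈ D, ∑ i : Fin n, (∑ t ∈ Cdi d i, (b t - subseqAvg (Sd d) b) ^ 2
            + (2 * ((Cdi d i).card : ℝ) / n + α * T)) :=
          Finset.sum_le_sum fun d hd => Finset.sum_le_sum fun i _ => h2 d hd i
      _ = R + (∑ d ∈ D, ∑ i : Fin n, 2 * ((Cdi d i).card : ℝ) / n)
            + D.card * (n * (α * T)) := by
          simp only [Finset.sum_add_distrib, Finset.sum_const, Finset.card_univ,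
            Fintype.card_fin, nsmul_eq_mul]
          rw [hR]
          rw [Finset.sum_congr rfl fun d (_ : d ∈ D) => h3 d]
          ring
      _ = R + 2 * (T:ℝ) / n + D.card * (n * (α * T)) := by
          have h4 : ∑ d ∈ D, ∑ i : Fin n, 2 * ((Cdi d i).card : ℝ) / n
              = 2 * (T:ℝ) / n := by
            have : ∀ d ∈ D, ∀ i : Fin n, 2 * ((Cdi d i).card : ℝ) / n
                = (2 / n) * ((Cdi d i).card : ℝ) := fun d _ i => by ring
            calc ∑ d ∈ D, ∑ i : Fin n, 2 * ((Cdi d i).card : ℝ) / n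
                = ∑ d ∈ D, ∑ i : Fin n, (2 / (n:ℝ)) * ((Cdi d i).card : ℝ) :=
                  Finset.sum_congr rfl fun d hd =>
                    Finset.sum_congr rfl fun i hi => this d hd i
              _ = (2 / (n:ℝ)) * ∑ d ∈ D, ∑ i : Fin n, ((Cdi d i).card : ℝ) := by
                  rw [Finset.mul_sum]
                  exact Finset.sum_congr rfl fun d _ => (Finset.mul_sum _ _ _).symm
              _ = 2 * (T:ℝ) / n := by rw [hcard]; ring
          rw [h4]
  calc (1 / (T:ℝ)) * ∑ t, (a t - b t) ^ 2
      ≤ (1 / (T:ℝ)) * (R + 2 * (T:ℝ) / n + D.card * (n * (α * T))) := by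
        apply mul_le_mul_of_nonneg_left big (by positivity)
    _ = (1 / (T:ℝ)) * R + 2 / n + D.card * (n * α) := by
        field_simp
    _ ≤ (1 / (T:ℝ)) * R + α * n * (D.card + 2) + 2 / n := by
        have hc0 : (0:ℝ) ≤ D.card := by positivity
        nlinarith [mul_nonneg hα0 hn0.le]

end
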